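/- For every k ≥ n, writing k = pn + q with p ≥ 1 and 0 ≤ q ≤ n−1, the optimal revisit time satisfies R*(k) = R*(n + ⌈q/p⌉). In particular, the values R*(n), R*(n+1), ..., R*(2n−1) determine R*(k) for all k ≥ n. -/

import Mathlib

/-- A closed walk with `k` visits on `n` targets, modeled as a `k`-periodic
sequence of targets in which consecutive visits are distinct and every
target is visited at least once in each period. -/
structure CWalk (n k : ℕ) where
  seq : ℕ → Fin n
  periodic : ∀ i, seq (i + k) = seq i
  step : ∀ i, seq i ≠ seq (i + 1)
  covers : ∀ d : Fin n, ∃ i < k, seq i = d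

namespace CWalk

/-- Travel time from the `i`-th to the `j`-th visit. -/
noncomputable def tt {n k : ℕ} (c : Fin n → Fin n → ℝ) (W : CWalk n k) (i j : ℕ) : ℝ :=
  ∑ t ∈ Finset.Ico i j, c (W.seq t) (W.seq (t + 1))

/-- Duration of one period of the walk. -/
noncomputable def duration {n k : ℕ} (c : Fin n → Fin n → ℝ) (W : CWalk n k) : ℝ :=
  W.tt c 0 k

/-- Revisit time of target `d`: the maximum time between consecutive visits to `d`. -/
noncomputable def RT {n k : ℕ} (c : Fin n → Fin n → ℝ) (W : CWalk n k) (d : Fin n) : ℝ :=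
  sSup {T : ℝ | ∃ i j : ℕ, i < j ∧ W.seq i = d ∧ W.seq j = d ∧
    (∀ t, i < t → t < j → W.seq t ≠ d) ∧ T = W.tt c i j}

/-- Revisit time of the walk: maximum revisit time over all targets. -/
noncomputable def R {n k : ℕ} (c : Fin n → Fin n → ℝ) (W : CWalk n k) : ℝ :=
  sSup {T : ℝ | ∃ d : Fin n, T = W.RT c d}

end CWalk

/-- Optimal revisit time over all closed walks with `k` visits. -/
noncomputable def Rstar (n : ℕ) (c : Fin n → Fin n → ℝ) (k : ℕ) : ℝ :=
  sInf {T : ℝ | ∃ W : CWalk n k, T = W.R c}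

/-- Optimal TSP tour length: minimal duration of a closed walk with `n` visits
(each target is then visited exactly once). -/
noncomputable def TSPstar (n : ℕ) (c : Fin n → Fin n → ℝ) : ℝ :=
  sInf {T : ℝ | ∃ W : CWalk n n, T = W.duration c}

namespace CWalk
variable {n k : ℕ} {c : Fin n → Fin n → ℝ} (W : CWalk n k)

lemma seq_add_mul (i b : ℕ) : W.seq (i + b * k) = W.seq i := by
  induction b with
  | zero => simp
  | succ b ih => rw [Nat.succ_mul, ← Nat.add_assoc, W.periodic, ih]

lemma seq_mod (hk : 0 < k) (i : ℕ) : W.seq (i % k) = W.seq i := by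
  conv_rhs => rw [← Nat.mod_add_div' i k]
  rw [W.seq_add_mul]

section c
variable (hc : ∀ u v : Fin n, u ≠ v → 0 < c u v)

include hc in
lemma step_pos (t : ℕ) : 0 < c (W.seq t) (W.seq (t + 1)) := hc _ _ (W.step t)

include hc in
lemma tt_nonneg (i j : ℕ) : 0 ≤ W.tt c i j :=
  Finset.sum_nonneg fun t _ => (W.step_pos hc t).le

lemma tt_add {i j l : ℕ} (hij : i ≤ j) (hjl : j ≤ l) :
    W.tt c i j + W.tt c j l = W.tt c i l := by
  unfold tt; rw [Finset.sum_Ico_consecutive _ hij hjl]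

include hc in
lemma tt_mono {i j l : ℕ} (hij : i ≤ j) (hjl : j ≤ l) : W.tt c i j ≤ W.tt c i l := by
  have := W.tt_add (c := c) hij hjl
  have h2 := W.tt_nonneg hc j l
  linarith

lemma tt_succ_window (i : ℕ) : W.tt c (i + 1) (i + 1 + k) = W.tt c i (i + k) := by
  rcases Nat.eq_zero_or_pos k with hk | hk
  · subst hk; simp [tt]
  have h1 : W.tt c i (i + 1) + W.tt c (i + 1) (i + 1 + k) = W.tt c i (i + 1 + k) := by
    apply W.tt_add <;> omega
  have h2 : W.tt c i (i + k) + W.tt c (i + k) (i + k + 1) = W.tt c i (i + k + 1) := by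
    apply W.tt_add <;> omega
  have e1 : ∀ a : ℕ, W.tt c a (a + 1) = c (W.seq a) (W.seq (a + 1)) := by
    intro a; unfold tt; rw [Finset.sum_Ico_eq_sum_range]; simp
  have h3 : W.tt c (i + k) (i + k + 1) = W.tt c i (i + 1) := by
    rw [e1, e1, W.periodic i, show i + k + 1 = i + 1 + k by omega, W.periodic (i+1)]
  rw [show i + 1 + k = i + k + 1 by omega] at h1 ⊢
  linarith

lemma tt_window (i : ℕ) : W.tt c i (i + k) = W.duration c := by
  induction i with
  | zero => simp [duration]
  | succ i ih => rw [← ih, tt_succ_window]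

/-- chain triangle inequality -/
lemma le_tt (htri : ∀ u v w : Fin n, c u w ≤ c u v + c v w) {i j : ℕ} (hij : i < j) :
    c (W.seq i) (W.seq j) ≤ W.tt c i j := by
  induction j with
  | zero => omega
  | succ j ih =>
    rcases Nat.lt_or_ge i j with h | h
    · have h1 := ih h
      have h2 : W.tt c i j + W.tt c j (j + 1) = W.tt c i (j + 1) := W.tt_add h.le (by omega)
      have h3 : W.tt c j (j + 1) = c (W.seq j) (W.seq (j + 1)) := by
        unfold tt; rw [Finset.sum_Ico_eq_sum_range]; simp
      have := htri (W.seq i) (W.seq j) (W.seq (j + 1))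
      linarith
    · have : i = j := by omega
      subst this
      unfold tt; rw [Finset.sum_Ico_eq_sum_range]; simp

/-- there is a visit to `d` in every window of length `k` -/
lemma exists_occ (hk : 0 < k) (d : Fin n) (s : ℕ) : ∃ t, s ≤ t ∧ t < s + k ∧ W.seq t = d := by
  induction s with
  | zero =>
    obtain ⟨i, hi, he⟩ := W.covers d
    exact ⟨i, by omega, by omega, he⟩
  | succ s ih =>
    obtain ⟨t, h1, h2, h3⟩ := ih
    rcases Nat.lt_or_ge t (s + 1) with h | h
    · refine ⟨t + k, by omega, by omega, ?_⟩
      rw [W.periodic]; exact h3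
    · exact ⟨t, h, by omega, h3⟩

def IsGap (W : CWalk n k) (d : Fin n) (i j : ℕ) : Prop :=
  i < j ∧ W.seq i = d ∧ W.seq j = d ∧ ∀ t, i < t → t < j → W.seq t ≠ d

lemma IsGap.le_window (hk : 0 < k) {d i j} (h : W.IsGap d i j) : j ≤ i + k := by
  by_contra hcon
  push_neg at hcon
  obtain ⟨t, h1, h2, h3⟩ := W.exists_occ hk d (i + 1)
  exact h.2.2.2 t (by omega) (by omega) h3

include hc in
lemma IsGap.tt_le_duration (hk : 0 < k) {d i j} (h : W.IsGap d i j) :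
    W.tt c i j ≤ W.duration c := by
  have := h.le_window W hk
  calc W.tt c i j ≤ W.tt c i (i + k) := W.tt_mono hc h.1.le this
    _ = W.duration c := W.tt_window i

lemma IsGap.mem_RTset {d i j} (h : W.IsGap d i j) :
    W.tt c i j ∈ {T : ℝ | ∃ i j : ℕ, i < j ∧ W.seq i = d ∧ W.seq j = d ∧
      (∀ t, i < t → t < j → W.seq t ≠ d) ∧ T = W.tt c i j} :=
  ⟨i, j, h.1, h.2.1, h.2.2.1, h.2.2.2, rfl⟩

include hc in
lemma RT_nonneg (d : Fin n) : 0 ≤ W.RT c d := by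
  apply Real.sSup_nonneg
  rintro x ⟨i, j, _, _, _, _, rfl⟩
  exact W.tt_nonneg hc i j

include hc in
lemma RT_le_duration (hk : 0 < k) (d : Fin n) : W.RT c d ≤ W.duration c := by
  apply Real.sSup_le
  · rintro x ⟨i, j, h1, h2, h3, h4, rfl⟩
    exact IsGap.tt_le_duration W hc hk ⟨h1, h2, h3, h4⟩
  · have := W.tt_nonneg hc 0 k
    exact this

include hc in
lemma IsGap.le_RT (hk : 0 < k) {d i j} (h : W.IsGap d i j) : W.tt c i j ≤ W.RT c d := by
  apply le_csSup
  · refine ⟨W.duration c, ?_⟩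
    rintro x ⟨i', j', h1, h2, h3, h4, rfl⟩
    exact IsGap.tt_le_duration W hc hk ⟨h1, h2, h3, h4⟩
  · exact h.mem_RTset W

include hc in
lemma R_nonneg : 0 ≤ W.R c := by
  apply Real.sSup_nonneg
  rintro x ⟨d, rfl⟩
  exact W.RT_nonneg hc d

lemma R_le {B : ℝ} (hB : 0 ≤ B) (h : ∀ d, W.RT c d ≤ B) : W.R c ≤ B := by
  apply Real.sSup_le
  · rintro x ⟨d, rfl⟩; exact h d
  · exact hB

lemma RT_le_R (d : Fin n) : W.RT c d ≤ W.R c := by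
  apply le_csSup
  · have : {T : ℝ | ∃ d : Fin n, T = W.RT c d} = Set.range (fun d => W.RT c d) := by
      ext x; simp [Set.range, eq_comm]
    rw [this]
    exact (Set.finite_range _).bddAbove
  · exact ⟨d, rfl⟩

include hc in
lemma R_le_duration (hk : 0 < k) : W.R c ≤ W.duration c :=
  W.R_le (W.tt_nonneg hc 0 k) (fun d => W.RT_le_duration hc hk d)

end c
end CWalk

section Rstar
variable {n : ℕ} {c : Fin n → Fin n → ℝ} (hc : ∀ u v : Fin n, u ≠ v → 0 < c u v)

include hc in
lemma Rstar_bddBelow (k : ℕ) : BddBelow {T : ℝ | ∃ W : CWalk n k, T = W.R c} := by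
  refine ⟨0, ?_⟩
  rintro x ⟨W, rfl⟩
  exact W.R_nonneg hc

include hc in
lemma Rstar_le_R {k : ℕ} (W : CWalk n k) : Rstar n c k ≤ W.R c :=
  csInf_le (Rstar_bddBelow hc k) ⟨W, rfl⟩

lemma le_Rstar {k : ℕ} (W₀ : CWalk n k) {B : ℝ} (h : ∀ W : CWalk n k, B ≤ W.R c) :
    B ≤ Rstar n c k :=
  le_csInf ⟨W₀.R c, W₀, rfl⟩ (by rintro x ⟨W, rfl⟩; exact h W)

end Rstar

section Extract
variable {n : ℕ}

/-- A cyclically admissible subsequence of size `r` of the window `[i,j]` of `w`,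
including the right endpoint `j` as a sentinel `u r`. -/
structure Extract (w : ℕ → Fin n) (i j r : ℕ) where
  u : ℕ → ℕ
  mono : ∀ a, a < r → u a < u (a + 1)
  lo : u 0 = i
  hi : u r = j
  adj : ∀ a, a < r → w (u a) ≠ w (u (a + 1))
  first : ∀ t, i ≤ t → t < j → (∀ s, i ≤ s → s < t → w s ≠ w t) → ∃ a, a < r ∧ u a = t

namespace Extract
variable {w : ℕ → Fin n} {i j r : ℕ}

lemma mono_le (E : Extract w i j r) : ∀ {a b : ℕ}, a ≤ b → b ≤ r → E.u a ≤ E.u b := by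
  intro a b hab hbr
  induction b with
  | zero =>
    have : a = 0 := by omega
    subst this; exact le_refl _
  | succ b ih =>
    rcases Nat.lt_or_ge a (b + 1) with h | h
    · have h1 : E.u a ≤ E.u b := ih (by omega) (by omega)
      have h2 := E.mono b (by omega)
      omega
    · have : a = b + 1 := by omega
      subst this; exact le_refl _

lemma mono_lt (E : Extract w i j r) {a b : ℕ} (hab : a < b) (hbr : b ≤ r) :
    E.u a < E.u b := by
  have h1 : E.u a ≤ E.u (b - 1) := E.mono_le (by omega) (by omega)
  have h2 : E.u (b - 1) < E.u (b - 1 + 1) := E.mono (b - 1) (by omega)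
  rw [show b - 1 + 1 = b by omega] at h2
  omega

lemma u_lt_j (E : Extract w i j r) {a : ℕ} (ha : a < r) : E.u a < j := by
  have := E.mono_lt ha (le_refl r); rwa [E.hi] at this

lemma u_ge_i (E : Extract w i j r) {a : ℕ} (ha : a ≤ r) : i ≤ E.u a := by
  have := E.mono_le (Nat.zero_le a) ha; rwa [E.lo] at this

/-- The base extract: the full window. -/
def base (w : ℕ → Fin n) (i j : ℕ) (hij : i < j)
    (hstep : ∀ t, w t ≠ w (t + 1)) : Extract w i j (j - i) where
  u a := i + a
  mono a _ := by omega
  lo := by omega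
  hi := by omega
  adj a _ := by
    have := hstep (i + a); simpa [Nat.add_assoc] using this
  first t h1 h2 _ := ⟨t - i, by omega, by omega⟩

/-- Key removal step: if `r > n ≥ 2` we can drop one (non-first) element. -/
lemma remove_one (E : Extract w i j r) (hn2 : 2 ≤ n) (hr : n < r)
    (hd : w j = w i) (hint : ∀ t, i < t → t < j → w t ≠ w i) :
    Nonempty (Extract w i j (r - 1)) := by
  classical
  have hr3 : 3 ≤ r := by omega
  -- pigeonhole: some value repeats among `w (E.u a)`, `a < r`
  have pg : ∃ b, 0 < b ∧ b < r ∧ ∃ a, a < b ∧ w (E.u a) = w (E.u b) := by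
    have hcard : Fintype.card (Fin n) < (Finset.range r).card := by
      simp [hr]
    obtain ⟨a, ha, b, hb, hne, heq⟩ :=
      Finset.exists_ne_map_eq_of_card_lt_of_maps_to hcard
        (fun a _ => Finset.mem_univ (w (E.u a)))
    simp only [Finset.mem_range] at ha hb
    rcases Nat.lt_or_ge a b with h | h
    · exact ⟨b, by omega, hb, a, h, heq⟩
    · exact ⟨a, by omega, ha, b, by omega, heq.symm⟩
  -- an unblocked duplicate exists
  have key : ∃ b, (0 < b ∧ b < r ∧ ∃ a, a < b ∧ w (E.u a) = w (E.u b)) ∧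
      w (E.u (b - 1)) ≠ w (E.u (b + 1)) := by
    by_contra hcon
    push_neg at hcon
    -- all duplicates are blocked; propagate to the end
    have go : ∀ f b, r - b ≤ f → 0 < b → b < r →
        (∃ a, a < b ∧ w (E.u a) = w (E.u b)) → False := by
      intro f
      induction f with
      | zero => intro b h1 h2 h3 _; omega
      | succ f ih =>
        intro b hf hb0 hbr hcand
        have hblock := hcon b ⟨hb0, hbr, hcand⟩
        rcases Nat.lt_or_ge b (r - 1) with hlt | hge
        · exact ih (b + 1) (by omega) (by omega) (by omega) ⟨b - 1, by omega, hblock⟩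
        · -- b = r - 1 : contradiction with the interior condition
          have hb : b = r - 1 := by omega
          subst hb
          rw [show r - 1 - 1 = r - 2 by omega, show r - 1 + 1 = r by omega, E.hi, hd]
            at hblock
          refine hint (E.u (r - 2)) ?_ ?_ hblock
          · have := E.mono_lt (a := 0) (b := r - 2) (by omega) (by omega)
            rwa [E.lo] at this
          · exact E.u_lt_j (by omega)
    obtain ⟨b, hb0, hbr, hcand⟩ := pg
    exact go (r - b) b le_rfl hb0 hbr hcand
  obtain ⟨b, ⟨hb0, hbr, hcand⟩, hnb⟩ := key
  refine ⟨⟨fun a => if a < b then E.u a else E.u (a + 1), ?_, ?_, ?_, ?_, ?_⟩⟩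
  · intro a ha
    rcases Nat.lt_or_ge (a + 1) b with h | h
    · simp only [if_pos h, if_pos (by omega : a < b)]
      exact E.mono a (by omega)
    rcases Nat.eq_or_lt_of_le h with h' | h'
    · simp only [if_neg (by omega : ¬ a + 1 < b), if_pos (by omega : a < b)]
      exact E.mono_lt (by omega) (by omega)
    · simp only [if_neg (by omega : ¬ a + 1 < b), if_neg (by omega : ¬ a < b)]
      exact E.mono (a + 1) (by omega)
  · simp only [if_pos hb0]; exact E.lo
  · rw [if_neg (by omega : ¬ r - 1 < b), show r - 1 + 1 = r by omega]; exact E.hi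
  · intro a ha
    rcases Nat.lt_or_ge (a + 1) b with h | h
    · simp only [if_pos h, if_pos (by omega : a < b)]
      exact E.adj a (by omega)
    rcases Nat.eq_or_lt_of_le h with h' | h'
    · simp only [if_neg (by omega : ¬ a + 1 < b), if_pos (by omega : a < b)]
      subst h'
      simpa using hnb
    · simp only [if_neg (by omega : ¬ a + 1 < b), if_neg (by omega : ¬ a < b)]
      exact E.adj (a + 1) (by omega)
  · intro t h1 h2 h3
    obtain ⟨a, har, hat⟩ := E.first t h1 h2 h3
    have hab : a ≠ b := by
      rintro rfl
      obtain ⟨a', ha', heq⟩ := hcand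
      refine h3 (E.u a') (E.u_ge_i (by omega)) ?_ (by rw [heq, hat])
      rw [← hat]; exact E.mono_lt ha' (by omega)
    rcases Nat.lt_or_ge a b with h | h
    · exact ⟨a, by omega, by simp [if_pos h, hat]⟩
    · refine ⟨a - 1, by omega, ?_⟩
      rw [if_neg (by omega : ¬ a - 1 < b), show a - 1 + 1 = a by omega]
      exact hat

lemma down (hn2 : 2 ≤ n)
    (hd : w j = w i) (hint : ∀ t, i < t → t < j → w t ≠ w i) :
    ∀ f r ℓ, r - ℓ ≤ f → n ≤ ℓ → ℓ ≤ r → Nonempty (Extract w i j r) →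
      Nonempty (Extract w i j ℓ) := by
  intro f
  induction f with
  | zero =>
    intro r ℓ h1 h2 h3 h4
    have : r = ℓ := by omega
    subst this; exact h4
  | succ f ih =>
    intro r ℓ h1 h2 h3 ⟨E⟩
    rcases Nat.eq_or_lt_of_le h3 with h' | h'
    · subst h'; exact ⟨E⟩
    · exact ih (r - 1) ℓ (by omega) h2 (by omega)
        (E.remove_one hn2 (by omega) hd hint)

/-- Extract a subsequence of any admissible length. -/
lemma exists_extract (w : ℕ → Fin n) (i j : ℕ) (hn2 : 2 ≤ n) (hij : i < j)
    (hstep : ∀ t, w t ≠ w (t + 1))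
    (hd : w j = w i) (hint : ∀ t, i < t → t < j → w t ≠ w i)
    (ℓ : ℕ) (hℓ1 : n ≤ ℓ) (hℓ2 : ℓ ≤ j - i) :
    Nonempty (Extract w i j ℓ) :=
  down hn2 hd hint (j - i - ℓ) (j - i) ℓ le_rfl hℓ1 hℓ2 ⟨base w i j hij hstep⟩

end Extract
end Extract

namespace CWalk
variable {n k : ℕ} {c : Fin n → Fin n → ℝ} (W : CWalk n k)

lemma mono_chain (u : ℕ → ℕ) (b : ℕ) (hu : ∀ a, a < b → u a ≤ u (a + 1)) :
    u 0 ≤ u b := by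
  induction b with
  | zero => exact le_refl _
  | succ b ih => exact le_trans (ih (fun a ha => hu a (by omega))) (hu b (by omega))

/-- telescoping sum of travel times along a monotone sequence of indices -/
lemma tt_sum (u : ℕ → ℕ) (b : ℕ) (hu : ∀ a, a < b → u a ≤ u (a + 1)) :
    ∑ a ∈ Finset.range b, W.tt c (u a) (u (a + 1)) = W.tt c (u 0) (u b) := by
  induction b with
  | zero => simp [tt]
  | succ b ih =>
    rw [Finset.sum_range_succ, ih (fun a ha => hu a (by omega))]
    exact W.tt_add (mono_chain u b (fun a ha => hu a (by omega))) (hu b (by omega))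

lemma extract_val {I J ℓ : ℕ} (hIJ : W.seq J = W.seq I) (hℓ0 : 0 < ℓ)
    (E : Extract W.seq I J ℓ) :
    ∀ a, a ≤ ℓ → W.seq (E.u (a % ℓ)) = W.seq (E.u a) := by
  intro a ha
  rcases Nat.lt_or_ge a ℓ with h | h
  · rw [Nat.mod_eq_of_lt h]
  · have : a = ℓ := by omega
    subst this
    rw [Nat.mod_self, E.lo, E.hi, hIJ]

/-- The closed walk obtained from an extract of a covering gap. -/
def walkOf {I J ℓ : ℕ} (hIJ : W.seq J = W.seq I)
    (hcov : ∀ e : Fin n, ∃ t, I ≤ t ∧ t < J ∧ W.seq t = e)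
    (hℓ : 2 ≤ ℓ) (E : Extract W.seq I J ℓ) : CWalk n ℓ where
  seq t := W.seq (E.u (t % ℓ))
  periodic t := by simp
  step t := by
    have h0 : 0 < ℓ := by omega
    have ha : t % ℓ < ℓ := Nat.mod_lt _ h0
    show W.seq (E.u (t % ℓ)) ≠ W.seq (E.u ((t + 1) % ℓ))
    have h1 : (t + 1) % ℓ = (t % ℓ + 1) % ℓ := by
      conv_lhs => rw [← Nat.mod_add_div t ℓ]
      rw [show t % ℓ + ℓ * (t / ℓ) + 1 = (t % ℓ + 1) + ℓ * (t / ℓ) by omega,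
        Nat.add_mul_mod_self_left]
    have h2 : W.seq (E.u ((t % ℓ + 1) % ℓ)) = W.seq (E.u (t % ℓ + 1)) :=
      W.extract_val hIJ h0 E (t % ℓ + 1) (by omega)
    rw [h1, h2]
    exact E.adj _ ha
  covers e := by
    classical
    have h0 : 0 < ℓ := by omega
    have hex : ∃ t, I ≤ t ∧ t < J ∧ W.seq t = e := hcov e
    obtain ⟨hf1, hf2, hf3⟩ := Nat.find_spec hex
    obtain ⟨a, ha, hua⟩ := E.first (Nat.find hex) hf1 hf2 (by
      intro s hs1 hs2 hse
      exact Nat.find_min hex (m := s) hs2 ⟨hs1, by omega, by rw [hse, hf3]⟩)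
    refine ⟨a, ha, ?_⟩
    show W.seq (E.u (a % ℓ)) = e
    rw [Nat.mod_eq_of_lt ha, hua, hf3]

lemma walkOf_duration_le {I J ℓ : ℕ} (hIJ : W.seq J = W.seq I)
    (hcov : ∀ e : Fin n, ∃ t, I ≤ t ∧ t < J ∧ W.seq t = e)
    (hℓ : 2 ≤ ℓ) (E : Extract W.seq I J ℓ)
    (htri : ∀ u v w : Fin n, c u w ≤ c u v + c v w) :
    (W.walkOf hIJ hcov hℓ E).duration c ≤ W.tt c I J := by
  have h0 : 0 < ℓ := by omega
  have key : (W.walkOf hIJ hcov hℓ E).duration c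
      = ∑ a ∈ Finset.range ℓ, c (W.seq (E.u a)) (W.seq (E.u (a + 1))) := by
    unfold duration tt
    rw [Finset.sum_Ico_eq_sum_range]
    simp only [Nat.sub_zero, Nat.zero_add]
    apply Finset.sum_congr rfl
    intro a ha
    simp only [Finset.mem_range] at ha
    show c ((W.walkOf hIJ hcov hℓ E).seq a) ((W.walkOf hIJ hcov hℓ E).seq (a+1)) = _
    show c (W.seq (E.u (a % ℓ))) (W.seq (E.u ((a + 1) % ℓ))) = _
    rw [Nat.mod_eq_of_lt ha, W.extract_val hIJ h0 E (a + 1) (by omega)]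
  rw [key]
  calc ∑ a ∈ Finset.range ℓ, c (W.seq (E.u a)) (W.seq (E.u (a + 1)))
      ≤ ∑ a ∈ Finset.range ℓ, W.tt c (E.u a) (E.u (a + 1)) := by
        apply Finset.sum_le_sum
        intro a ha
        simp only [Finset.mem_range] at ha
        exact W.le_tt htri (E.mono a ha)
    _ = W.tt c (E.u 0) (E.u ℓ) := W.tt_sum _ ℓ (fun a ha => (E.mono a ha).le)
    _ = W.tt c I J := by rw [E.lo, E.hi]

end CWalk

lemma mod_inj_window {k s x y : ℕ} (hk : 0 < k) (hx : s ≤ x) (hx2 : x < s + k)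
    (hy : s ≤ y) (hy2 : y < s + k) (h : x % k = y % k) : x = y := by
  rcases Nat.le_total x y with hxy | hxy
  · have : k ∣ y - x := (Nat.modEq_iff_dvd' hxy).mp h
    have := Nat.eq_zero_of_dvd_of_lt this (by omega)
    omega
  · have : k ∣ x - y := (Nat.modEq_iff_dvd' hxy).mp h.symm
    have := Nat.eq_zero_of_dvd_of_lt this (by omega)
    omega

namespace CWalk
variable {n k : ℕ} {c : Fin n → Fin n → ℝ} (W : CWalk n k)

/-- pigeonhole: some target is visited at most `p` times per period -/
lemma exists_rare (p : ℕ) (hcard : k < n * (p + 1)) :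
    ∃ d : Fin n, ((Finset.range k).filter (fun t => W.seq t = d)).card ≤ p := by
  classical
  by_contra hcon
  push_neg at hcon
  have hsum : (Finset.range k).card =
      ∑ d : Fin n, ((Finset.range k).filter (fun t => W.seq t = d)).card :=
    Finset.card_eq_sum_card_fiberwise (fun t _ => Finset.mem_univ (W.seq t))
  have hge : ∑ d : Fin n, ((Finset.range k).filter (fun t => W.seq t = d)).card
      ≥ ∑ _d : Fin n, (p + 1) :=
    Finset.sum_le_sum (fun d _ => hcon d)
  simp only [Finset.sum_const, Finset.card_univ, Fintype.card_fin, smul_eq_mul,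
    Finset.card_range] at hsum hge
  omega

/-- a rare target has a long gap (starting beyond `N`) -/
lemma exists_long_gap (hk : 0 < k) (p L N : ℕ) (hp : 0 < p) (d : Fin n)
    (hrare : ((Finset.range k).filter (fun t => W.seq t = d)).card ≤ p)
    (hlen : p * (L - 1) < k) (hL : 0 < L) :
    ∃ I J, W.IsGap d I J ∧ L ≤ J - I ∧ N ≤ I := by
  classical
  have hnxt : ∀ s : ℕ, ∃ t, s < t ∧ W.seq t = d := by
    intro s
    obtain ⟨t, h1, h2, h3⟩ := W.exists_occ hk d (s + 1)
    exact ⟨t, by omega, h3⟩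
  set nxt : ℕ → ℕ := fun s => Nat.find (hnxt s) with hnxtdef
  have nxt_gt : ∀ s, s < nxt s := fun s => (Nat.find_spec (hnxt s)).1
  have nxt_seq : ∀ s, W.seq (nxt s) = d := fun s => (Nat.find_spec (hnxt s)).2
  have nxt_min : ∀ s t, s < t → t < nxt s → W.seq t ≠ d := by
    intro s t h1 h2 h3
    exact Nat.find_min (hnxt s) h2 ⟨h1, h3⟩
  obtain ⟨o₀, ho1, ho2, ho3⟩ := W.exists_occ hk d N
  set o : ℕ → ℕ := fun a => nxt^[a] o₀ with hodef
  have o_succ : ∀ a, o (a + 1) = nxt (o a) := by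
    intro a
    simp only [hodef, Function.iterate_succ_apply']
  have o_seq : ∀ a, W.seq (o a) = d := by
    intro a
    induction a with
    | zero => exact ho3
    | succ a ih => rw [o_succ]; exact nxt_seq _
  have o_mono : ∀ a, o a < o (a + 1) := fun a => by rw [o_succ]; exact nxt_gt _
  have o_ge : ∀ a, o₀ ≤ o a := by
    intro a
    induction a with
    | zero => exact le_refl _
    | succ a ih => have := o_mono a; omega
  have o_gap : ∀ a, W.IsGap d (o a) (o (a + 1)) := by
    intro a
    refine ⟨o_mono a, o_seq a, o_seq (a + 1), ?_⟩
    intro t h1 h2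
    rw [o_succ] at h2
    exact nxt_min _ _ h1 h2
  -- some gap among the first p has length ≥ L
  by_cases hbig : ∃ a, a < p ∧ L ≤ o (a + 1) - o a
  · obtain ⟨a, ha, hlen'⟩ := hbig
    exact ⟨o a, o (a + 1), o_gap a, hlen', le_trans ho1 (o_ge a)⟩
  · exfalso
    push_neg at hbig
    have hbound : ∀ a, a ≤ p → o a ≤ o₀ + a * (L - 1) := by
      intro a ha
      induction a with
      | zero =>
        have h0 : o 0 = o₀ := by simp [hodef]
        omega
      | succ a ih =>
        have h1 := ih (by omega)
        have h2 := hbig a (by omega)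
        have h3 := o_mono a
        have : o (a + 1) ≤ o a + (L - 1) := by omega
        calc o (a + 1) ≤ o a + (L - 1) := this
          _ ≤ o₀ + a * (L - 1) + (L - 1) := by omega
          _ = o₀ + (a + 1) * (L - 1) := by ring
    -- p+1 occurrences in a window of length k
    have hwin : ∀ a, a ≤ p → o₀ ≤ o a ∧ o a < o₀ + k := by
      intro a ha
      refine ⟨o_ge a, ?_⟩
      have h1 := hbound a ha
      have h2 : a * (L - 1) ≤ p * (L - 1) := Nat.mul_le_mul_right _ ha
      omega
    have o_mono_le : ∀ x y : ℕ, x ≤ y → o x ≤ o y := by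
      intro x y hxy
      induction y with
      | zero =>
        have : x = 0 := by omega
        subst this; exact le_refl _
      | succ y ih =>
        rcases Nat.lt_or_ge x (y + 1) with hh | hh
        · exact le_trans (ih (by omega)) (o_mono y).le
        · have : x = y + 1 := by omega
          subst this; exact le_refl _
    have hinj : Set.InjOn (fun a => o a % k) (Finset.range (p + 1)) := by
      intro a ha b hb hab
      simp only [Finset.coe_range, Set.mem_Iio] at ha hb
      have h1 := hwin a (by omega)
      have h2 := hwin b (by omega)
      have heq := mod_inj_window hk h1.1 h1.2 h2.1 h2.2 hab
      by_contra hne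
      rcases Nat.lt_or_ge a b with h | h
      · have h4 := o_mono a
        have h5 := o_mono_le (a + 1) b h
        omega
      · have hba : b < a := by omega
        have h4 := o_mono b
        have h5 := o_mono_le (b + 1) a hba
        omega
    have hmaps : ∀ a ∈ Finset.range (p + 1),
        (fun a => o a % k) a ∈ (Finset.range k).filter (fun t => W.seq t = d) := by
      intro a ha
      simp only [Finset.mem_filter, Finset.mem_range]
      exact ⟨Nat.mod_lt _ hk, by rw [W.seq_mod hk]; exact o_seq a⟩
    have hcard := Finset.card_le_card_of_injOn _ hmaps hinj
    simp only [Finset.card_range] at hcard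
    omega

/-- coverage growth: from any gap, find a (weakly longer) gap whose window covers
all targets -/
lemma grow (hk : 0 < k) : ∀ f (d : Fin n) I J, W.IsGap d I J →
    n - ((Finset.Ico I J).image W.seq).card ≤ f →
    (n - ((Finset.Ico I J).image W.seq).card) * k ≤ I →
    ∃ (d' : Fin n) (I' J' : ℕ), W.IsGap d' I' J' ∧ J - I ≤ J' - I' ∧
      (∀ e : Fin n, ∃ t, I' ≤ t ∧ t < J' ∧ W.seq t = e) := by
  classical
  intro f
  induction f with
  | zero =>
    intro d I J hgap hf hI
    -- coverage is everything
    have hcov : ∀ e : Fin n, ∃ t, I ≤ t ∧ t < J ∧ W.seq t = e := by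
      intro e
      have hcard : n ≤ ((Finset.Ico I J).image W.seq).card := by omega
      have : ((Finset.Ico I J).image W.seq) = Finset.univ := by
        apply Finset.eq_univ_of_card
        have hle := Finset.card_le_univ ((Finset.Ico I J).image W.seq)
        simp only [Finset.card_univ, Fintype.card_fin] at hle ⊢
        omega
      have : e ∈ (Finset.Ico I J).image W.seq := by rw [this]; exact Finset.mem_univ e
      obtain ⟨t, ht, hte⟩ := Finset.mem_image.mp this
      simp only [Finset.mem_Ico] at ht
      exact ⟨t, ht.1, ht.2, hte⟩
    exact ⟨d, I, J, hgap, le_refl _, hcov⟩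
  | succ f ih =>
    intro d I J hgap hf hI
    set S := (Finset.Ico I J).image W.seq with hS
    by_cases hfull : S = Finset.univ
    · refine ⟨d, I, J, hgap, le_refl _, ?_⟩
      intro e
      have : e ∈ S := by rw [hfull]; exact Finset.mem_univ e
      obtain ⟨t, ht, hte⟩ := Finset.mem_image.mp this
      simp only [Finset.mem_Ico] at ht
      exact ⟨t, ht.1, ht.2, hte⟩
    · obtain ⟨e, he⟩ : ∃ e : Fin n, e ∉ S := by
        by_contra hcon
        push_neg at hcon
        exact hfull (Finset.eq_univ_of_forall hcon)
      have hcardS : S.card < n := by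
        have h1 := Finset.card_le_univ S
        simp only [Finset.card_univ, Fintype.card_fin] at h1
        rcases Nat.eq_or_lt_of_le h1 with h | h
        · exfalso
          exact hfull (Finset.eq_univ_of_card _ (by simp [h]))
        · exact h
      have hIk : k ≤ I := by
        have h1 : 1 ≤ n - S.card := by omega
        have h2 : 1 * k ≤ (n - S.card) * k := Nat.mul_le_mul_right _ h1
        omega
      have hdS : d ∈ S := by
        apply Finset.mem_image.mpr
        exact ⟨I, by simp [Finset.mem_Ico]; exact hgap.1, hgap.2.1⟩
      have hed : e ≠ d := fun h => he (h ▸ hdS)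
      have hIJlt : I < J := hgap.1
      -- previous occurrence of e
      have hPex : ∃ t, I - k ≤ t ∧ t ≤ I ∧ W.seq t = e := by
        obtain ⟨t, h1, h2, h3⟩ := W.exists_occ hk e (I - k)
        exact ⟨t, h1, by omega, h3⟩
      obtain ⟨t₁, ht₁lo, ht₁I, ht₁e⟩ := hPex
      set ie := Nat.findGreatest (fun s => W.seq s = e) I with hie
      have hie_spec : W.seq ie = e := by
        rw [hie]; exact Nat.findGreatest_spec (P := fun s => W.seq s = e) ht₁I ht₁e
      have hie_le : ie ≤ I := Nat.findGreatest_le I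
      have hie_lt : ie < I := by
        rcases Nat.eq_or_lt_of_le hie_le with h | h
        · exfalso
          rw [h] at hie_spec
          exact hed (by rw [← hie_spec]; exact hgap.2.1)
        · exact h
      have hie_ge : t₁ ≤ ie := Nat.le_findGreatest ht₁I ht₁e
      have hie_greatest : ∀ t, ie < t → t ≤ I → W.seq t ≠ e := by
        intro t h1 h2
        exact Nat.findGreatest_is_greatest h1 h2
      -- next occurrence of e
      have hQex : ∃ t, J < t ∧ W.seq t = e := by
        obtain ⟨t, h1, h2, h3⟩ := W.exists_occ hk e (J + 1)
        exact ⟨t, by omega, h3⟩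
      set je := Nat.find hQex with hje
      have hje_spec : J < je ∧ W.seq je = e := Nat.find_spec hQex
      have hje_min : ∀ t, J < t → t < je → W.seq t ≠ e := by
        intro t h1 h2 h3
        exact Nat.find_min hQex h2 ⟨h1, h3⟩
      -- the new gap
      have hnewgap : W.IsGap e ie je := by
        refine ⟨by omega, hie_spec, hje_spec.2, ?_⟩
        intro t h1 h2 h3
        rcases Nat.lt_or_ge t (I + 1) with h | h
        · exact hie_greatest t h1 (by omega) h3
        · rcases Nat.lt_or_ge t J with h' | h'
          · apply he
            rw [hS, ← h3]
            apply Finset.mem_image.mpr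
            exact ⟨t, by simp [Finset.mem_Ico]; omega, rfl⟩
          · rcases Nat.eq_or_lt_of_le h' with h'' | h''
            · rw [← h''] at h3
              exact hed (by rw [← h3]; exact hgap.2.2.1)
            · exact hje_min t h'' h2 h3
      -- coverage grows
      have hsub : insert e S ⊆ (Finset.Ico ie je).image W.seq := by
        intro x hx
        rcases Finset.mem_insert.mp hx with h | h
        · apply Finset.mem_image.mpr
          exact ⟨ie, by simp [Finset.mem_Ico]; omega, h ▸ hie_spec⟩
        · obtain ⟨t, ht, hte⟩ := Finset.mem_image.mp h
          simp only [Finset.mem_Ico] at ht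
          apply Finset.mem_image.mpr
          exact ⟨t, by simp [Finset.mem_Ico]; omega, hte⟩
      have hcard' : S.card + 1 ≤ ((Finset.Ico ie je).image W.seq).card := by
        have h1 : (insert e S).card = S.card + 1 := Finset.card_insert_of_notMem he
        have h2 := Finset.card_le_card hsub
        omega
      obtain ⟨d', I', J', hg, hlen, hcov⟩ := ih e ie je hnewgap
        (by omega)
        (by
          have h1 : ie + k ≥ I := by omega
          have h2 : n - ((Finset.Ico ie je).image W.seq).card ≤ n - S.card - 1 := by omega
          calc (n - ((Finset.Ico ie je).image W.seq).card) * k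
              ≤ (n - S.card - 1) * k := Nat.mul_le_mul_right k h2
            _ = (n - S.card) * k - k := by rw [Nat.sub_mul, Nat.one_mul]
            _ ≤ I - k := by omega
            _ ≤ ie := by omega)
      exact ⟨d', I', J', hg, by omega, hcov⟩

end CWalk

namespace CWalk
variable {n k : ℕ} {c : Fin n → Fin n → ℝ} (W : CWalk n k)

/-- Lower bound: from a walk with `k` visits produce one with `n + m` visits
whose revisit time is no larger. -/
lemma lower_aux (hn2 : 2 ≤ n)
    (hc : ∀ u v : Fin n, u ≠ v → 0 < c u v)
    (htri : ∀ u v w : Fin n, c u w ≤ c u v + c v w)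
    (p m : ℕ) (hp : 0 < p) (hcount : k < n * (p + 1)) (hlen : p * (n + m - 1) < k) :
    ∃ V : CWalk n (n + m), V.R c ≤ W.R c := by
  classical
  have hk : 0 < k := by
    have h1 : 1 * (n + m - 1) ≤ p * (n + m - 1) := Nat.mul_le_mul_right _ hp
    omega
  obtain ⟨d, hrare⟩ := W.exists_rare p hcount
  obtain ⟨I, J, hgap, hJI, hNI⟩ :=
    W.exists_long_gap hk p (n + m) (n * k) hp d hrare hlen (by omega)
  -- grow to a covering gap
  have hScard : 1 ≤ ((Finset.Ico I J).image W.seq).card := by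
    apply Finset.card_pos.mpr
    exact ⟨d, Finset.mem_image.mpr ⟨I, by simp [Finset.mem_Ico]; exact hgap.1, hgap.2.1⟩⟩
  obtain ⟨d', I', J', hgap', hlen', hcov'⟩ :=
    W.grow hk (n - ((Finset.Ico I J).image W.seq).card) d I J hgap le_rfl
      (by
        have h1 : n - ((Finset.Ico I J).image W.seq).card ≤ n - 1 := by omega
        have h2 : (n - ((Finset.Ico I J).image W.seq).card) * k ≤ (n - 1) * k :=
          Nat.mul_le_mul_right _ h1
        have h3 : (n - 1) * k ≤ n * k := Nat.mul_le_mul_right _ (by omega)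
        omega)
  have hJ'I' : W.seq J' = W.seq I' := by rw [hgap'.2.2.1, hgap'.2.1]
  have hint' : ∀ t, I' < t → t < J' → W.seq t ≠ W.seq I' := by
    rw [hgap'.2.1]; exact hgap'.2.2.2
  obtain ⟨E⟩ := Extract.exists_extract W.seq I' J' hn2 hgap'.1 W.step hJ'I' hint'
    (n + m) (by omega) (by omega)
  refine ⟨W.walkOf hJ'I' hcov' (by omega) E, ?_⟩
  calc (W.walkOf hJ'I' hcov' (by omega) E).R c
      ≤ (W.walkOf hJ'I' hcov' (by omega) E).duration c :=
        R_le_duration _ hc (by omega)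
    _ ≤ W.tt c I' J' := W.walkOf_duration_le hJ'I' hcov' (by omega) E htri
    _ ≤ W.RT c d' := IsGap.le_RT W hc hk hgap'
    _ ≤ W.R c := W.RT_le_R d'

end CWalk

namespace CWalk
variable {n P : ℕ} {c : Fin n → Fin n → ℝ} (W : CWalk n P)

/-- Upper bound: from a walk with `P = n + m` visits produce one with `k` visits
(`p·n ≤ k ≤ p·P`) whose revisit time is no larger. -/
lemma upper_aux (hn2 : 2 ≤ n)
    (hc : ∀ u v : Fin n, u ≠ v → 0 < c u v)
    (htri : ∀ u v w : Fin n, c u w ≤ c u v + c v w)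
    (hP1 : n ≤ P) (hP2 : P < 2 * n)
    (p k : ℕ) (hp : 0 < p) (hk1 : p * n ≤ k) (hk2 : k ≤ p * P) :
    ∃ V : CWalk n k, V.R c ≤ W.R c := by
  classical
  have hP0 : 0 < P := by omega
  have hk0 : 0 < k := by
    have h1 : 1 * n ≤ p * n := Nat.mul_le_mul_right _ hp
    omega
  -- (a) a target visited only once per period
  obtain ⟨d, hrare⟩ := W.exists_rare 1 (by omega)
  obtain ⟨i₀, hi₀P, hi₀d⟩ := W.covers d
  have huniq : ∀ t, t < P → W.seq t = d → t = i₀ := by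
    intro t htP htd
    by_contra hne
    have h2 : 1 < ((Finset.range P).filter (fun t => W.seq t = d)).card :=
      Finset.one_lt_card.mpr
        ⟨t, by simp only [Finset.mem_filter, Finset.mem_range]; exact ⟨htP, htd⟩,
         i₀, by simp only [Finset.mem_filter, Finset.mem_range]; exact ⟨hi₀P, hi₀d⟩, hne⟩
    omega
  have huniq' : ∀ t, i₀ < t → t < i₀ + P → W.seq t ≠ d := by
    intro t h1 h2 hcontra
    have hmod : W.seq (t % P) = d := by rw [W.seq_mod hP0]; exact hcontra
    have h3 := huniq (t % P) (Nat.mod_lt _ hP0) hmod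
    have h4 : t % P = i₀ % P := by rw [h3, Nat.mod_eq_of_lt hi₀P]
    have h5 : t = i₀ := mod_inj_window hP0 (by omega) h2 (by omega) (by omega) h4
    omega
  have hgapd : W.IsGap d i₀ (i₀ + P) :=
    ⟨by omega, hi₀d, by rw [W.periodic]; exact hi₀d, huniq'⟩
  -- window covering and first occurrences
  have hcovP : ∀ e : Fin n, ∃ t, i₀ ≤ t ∧ t < i₀ + P ∧ W.seq t = e :=
    fun e => W.exists_occ hP0 e i₀
  set π : Fin n → ℕ := fun e => Nat.find (hcovP e) with hπdef
  have hπ1 : ∀ e, i₀ ≤ π e := fun e => (Nat.find_spec (hcovP e)).1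
  have hπ2 : ∀ e, π e < i₀ + P := fun e => (Nat.find_spec (hcovP e)).2.1
  have hπ3 : ∀ e, W.seq (π e) = e := fun e => (Nat.find_spec (hcovP e)).2.2
  have hπf : ∀ e s, i₀ ≤ s → s < π e → W.seq s ≠ W.seq (π e) := by
    intro e s hs1 hs2 hcontra
    have h5 := hπ2 e
    exact Nat.find_min (hcovP e) hs2 ⟨hs1, by omega, by rw [hcontra, hπ3]⟩
  -- block boundaries
  set σ : ℕ → ℕ := fun j => j * k / p with hσdef
  have hσ0 : σ 0 = 0 := by simp [hσdef]
  have hσp : σ p = k := Nat.mul_div_cancel_left k hp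
  have hσmono : ∀ a b, a ≤ b → σ a ≤ σ b :=
    fun a b h => Nat.div_le_div_right (Nat.mul_le_mul_right k h)
  have hσlb : ∀ j, σ j + n ≤ σ (j + 1) := by
    intro j
    have h1 : (j * k + n * p) / p = σ j + n := Nat.add_mul_div_right _ _ hp
    have h2 : j * k + n * p ≤ (j + 1) * k := by
      have h3 : n * p ≤ k := by rw [mul_comm]; exact hk1
      have h4 : (j + 1) * k = j * k + k := by ring
      omega
    calc σ j + n = (j * k + n * p) / p := h1.symm
      _ ≤ ((j + 1) * k) / p := Nat.div_le_div_right h2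
  have hσub : ∀ j, σ (j + 1) ≤ σ j + P := by
    intro j
    have h1 : (j * k + P * p) / p = σ j + P := Nat.add_mul_div_right _ _ hp
    have h2 : (j + 1) * k ≤ j * k + P * p := by
      have h3 : k ≤ P * p := by rw [mul_comm]; exact hk2
      have h4 : (j + 1) * k = j * k + k := by ring
      omega
    calc σ (j + 1) ≤ (j * k + P * p) / p := Nat.div_le_div_right h2
      _ = σ j + P := h1
  -- the per-block extracts
  have hEx : ∀ j : ℕ, Nonempty (Extract W.seq i₀ (i₀ + P) (σ (j + 1) - σ j)) := by
    intro j
    apply Extract.exists_extract W.seq i₀ (i₀ + P) hn2 (by omega) W.step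
      (by rw [W.periodic])
      (by
        intro t h1 h2 hcontra
        exact huniq' t h1 h2 (by rw [hcontra, hi₀d]))
      (σ (j + 1) - σ j) (by have := hσlb j; omega)
      (by have := hσub j; omega)
  have hEuEx : ∃ Eu : ℕ → ℕ → ℕ,
      (∀ j a, a < σ (j + 1) - σ j → Eu j a < Eu j (a + 1)) ∧
      (∀ j, Eu j 0 = i₀) ∧
      (∀ j, Eu j (σ (j + 1) - σ j) = i₀ + P) ∧
      (∀ j a, a < σ (j + 1) - σ j → W.seq (Eu j a) ≠ W.seq (Eu j (a + 1))) ∧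
      (∀ j t, i₀ ≤ t → t < i₀ + P → (∀ s, i₀ ≤ s → s < t → W.seq s ≠ W.seq t) →
        ∃ a, a < σ (j + 1) - σ j ∧ Eu j a = t) ∧
      (∀ j a, a ≤ σ (j + 1) - σ j → i₀ ≤ Eu j a) ∧
      (∀ j a b, a < b → b ≤ σ (j + 1) - σ j → Eu j a < Eu j b) := by
    refine ⟨fun j => ((hEx j).some).u, ?_, ?_, ?_, ?_, ?_, ?_, ?_⟩
    · exact fun j => ((hEx j).some).mono
    · exact fun j => ((hEx j).some).lo
    · exact fun j => ((hEx j).some).hi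
    · exact fun j => ((hEx j).some).adj
    · exact fun j => ((hEx j).some).first
    · exact fun j a ha => ((hEx j).some).u_ge_i ha
    · exact fun j a b hab hb => ((hEx j).some).mono_lt hab hb
  obtain ⟨Eu, hEmono, hElo, hEhi, hEadj, hEfirst, hEge, hEltj⟩ := hEuEx
  -- block index
  set Jf : ℕ → ℕ := fun t' => Nat.findGreatest (fun j => σ j ≤ t') p with hJdef
  have hJ1 : ∀ t', σ (Jf t') ≤ t' := by
    intro t'
    exact Nat.findGreatest_spec (P := fun j => σ j ≤ t') (Nat.zero_le p) (by omega)
  have hJp : ∀ t', Jf t' ≤ p := fun t' => Nat.findGreatest_le p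
  have hJ2 : ∀ t', t' < k → Jf t' < p := by
    intro t' ht'
    rcases Nat.eq_or_lt_of_le (hJp t') with h | h
    · exfalso
      have := hJ1 t'
      rw [h, hσp] at this
      omega
    · exact h
  have hJ3 : ∀ t', t' < k → t' < σ (Jf t' + 1) := by
    intro t' ht'
    by_contra hcon
    push_neg at hcon
    have h2 : Jf t' + 1 ≤ Jf t' := Nat.le_findGreatest (hJ2 t' ht') hcon
    omega
  have hJeq : ∀ j a, j < p → a < σ (j + 1) - σ j → Jf (σ j + a) = j := by
    intro j a hj ha
    apply le_antisymm
    · by_contra h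
      push_neg at h
      have h1 : σ (j + 1) ≤ σ (Jf (σ j + a)) := hσmono _ _ h
      have h2 := hJ1 (σ j + a)
      omega
    · exact Nat.le_findGreatest hj.le (by omega)
  -- the global index map
  set useq : ℕ → ℕ := fun t =>
    Eu (Jf (t % k)) (t % k - σ (Jf (t % k))) + (Jf (t % k)) * P + (t / k) * (p * P)
    with husdef
  have husval : ∀ t, W.seq (useq t) = W.seq (Eu (Jf (t % k)) (t % k - σ (Jf (t % k)))) := by
    intro t
    simp only [husdef]
    rw [show Eu (Jf (t % k)) (t % k - σ (Jf (t % k))) + (Jf (t % k)) * P + (t / k) * (p * P)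
      = Eu (Jf (t % k)) (t % k - σ (Jf (t % k))) + (Jf (t % k) + t / k * p) * P by ring]
    exact W.seq_add_mul _ _
  have husa : ∀ t, t % k - σ (Jf (t % k)) < σ (Jf (t % k) + 1) - σ (Jf (t % k)) := by
    intro t
    have h1 := hJ1 (t % k)
    have h2 := hJ3 (t % k) (Nat.mod_lt _ hk0)
    omega
  have husge : ∀ t, i₀ ≤ useq t := by
    intro t
    have h1 : i₀ ≤ Eu (Jf (t % k)) (t % k - σ (Jf (t % k))) :=
      hEge _ _ (le_of_lt (husa t))
    simp only [husdef]
    omega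
  -- the key step fact
  have hkey : ∀ t, useq t < useq (t + 1) ∧ W.seq (useq t) ≠ W.seq (useq (t + 1)) := by
    intro t
    have ht' : t % k < k := Nat.mod_lt _ hk0
    have hdecomp : t % k + k * (t / k) = t := Nat.mod_add_div t k
    have hσJ := hJ1 (t % k)
    have hJP := hJ2 (t % k) ht'
    have ht'σ := hJ3 (t % k) ht'
    have ha := husa t
    rcases Nat.lt_or_ge (t % k + 1) k with hA | hB
    · -- stay within the same period
      have e1 : (t + 1) % k = t % k + 1 := by
        conv_lhs => rw [← hdecomp]
        rw [show t % k + k * (t / k) + 1 = (t % k + 1) + (t / k) * k by ring,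
          Nat.add_mul_mod_self_right, Nat.mod_eq_of_lt hA]
      have e2 : (t + 1) / k = t / k := by
        conv_lhs => rw [← hdecomp]
        rw [show t % k + k * (t / k) + 1 = (t % k + 1) + k * (t / k) by ring,
          Nat.add_mul_div_left _ _ hk0, Nat.div_eq_of_lt hA, Nat.zero_add]
      rcases Nat.lt_or_ge (t % k + 1) (σ (Jf (t % k) + 1)) with hA1 | hA2
      · -- same block
        have eJ : Jf (t % k + 1) = Jf (t % k) := by
          have h6 := hJeq (Jf (t % k)) (t % k + 1 - σ (Jf (t % k))) hJP (by omega)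
          rw [show σ (Jf (t % k)) + (t % k + 1 - σ (Jf (t % k))) = t % k + 1 by omega] at h6
          exact h6
        have ea : t % k + 1 - σ (Jf (t % k)) = (t % k - σ (Jf (t % k))) + 1 := by omega
        constructor
        · simp only [husdef, e1, e2, eJ, ea]
          have := hEmono _ _ ha
          omega
        · rw [husval, husval, e1, eJ, ea]
          exact hEadj _ _ ha
      · -- next block within the same period
        have hA2' : t % k + 1 = σ (Jf (t % k) + 1) := by omega
        have hJP1 : Jf (t % k) + 1 < p := by
          by_contra hcon
          push_neg at hcon
          have h7 : σ p ≤ σ (Jf (t % k) + 1) := hσmono _ _ hcon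
          omega
        have eJ : Jf (t % k + 1) = Jf (t % k) + 1 := by
          have h0 : (0 : ℕ) < σ (Jf (t % k) + 1 + 1) - σ (Jf (t % k) + 1) := by
            have := hσlb (Jf (t % k) + 1); omega
          have h6 := hJeq (Jf (t % k) + 1) 0 hJP1 h0
          rw [Nat.add_zero] at h6
          rw [hA2']
          exact h6
        have ea : t % k - σ (Jf (t % k)) + 1 = σ (Jf (t % k) + 1) - σ (Jf (t % k)) := by omega
        have hlast : Eu (Jf (t % k)) (t % k - σ (Jf (t % k))) < i₀ + P := by
          have h1 := hEltj (Jf (t % k)) _ _ ha (le_refl _)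
          rw [hEhi] at h1
          exact h1
        have hnew0 : Eu (Jf (t % k) + 1) (t % k + 1 - σ (Jf (t % k) + 1)) = i₀ := by
          rw [show t % k + 1 - σ (Jf (t % k) + 1) = 0 by omega]
          exact hElo _
        constructor
        · simp only [husdef, e1, e2, eJ, hnew0]
          have h2 : (Jf (t % k) + 1) * P = Jf (t % k) * P + P := by ring
          omega
        · rw [husval, husval, e1, eJ, hnew0]
          have h3 : W.seq i₀ = W.seq (Eu (Jf (t % k)) (σ (Jf (t % k) + 1) - σ (Jf (t % k)))) := by
            rw [hEhi, W.periodic]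
          rw [h3, ← ea]
          exact hEadj _ _ ha
    · -- wrap to the next period
      have hBeq : t % k + 1 = k := by omega
      have hmulk : t + 1 = (t / k + 1) * k := by
        have h2 : (t / k + 1) * k = t / k * k + k := by ring
        have h3 : t / k * k = k * (t / k) := by ring
        omega
      have e1 : (t + 1) % k = 0 := by rw [hmulk, Nat.mul_mod_left]
      have e2 : (t + 1) / k = t / k + 1 := by
        rw [hmulk]
        exact Nat.mul_div_cancel _ hk0
      have hJlast : Jf (t % k) = p - 1 := by
        apply le_antisymm
        · omega
        · by_contra hcon
          push_neg at hcon
          have h1 : Jf (t % k) + 1 ≤ p - 1 := by omega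
          have h2 : σ (Jf (t % k) + 1) ≤ σ (p - 1) := hσmono _ _ h1
          have h3 : σ (p - 1) + n ≤ σ p := by
            have h4 := hσlb (p - 1)
            rw [show p - 1 + 1 = p by omega] at h4
            exact h4
          omega
      have eJ0 : Jf 0 = 0 := by
        have h0 : (0 : ℕ) < σ (0 + 1) - σ 0 := by
          have := hσlb 0; omega
        have h5 := hJeq 0 0 hp h0
        rw [hσ0] at h5
        simpa using h5
      have hlast : Eu (Jf (t % k)) (t % k - σ (Jf (t % k))) < i₀ + P := by
        have h1 := hEltj (Jf (t % k)) _ _ ha (le_refl _)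
        rw [hEhi] at h1
        exact h1
      have hnew0 : Eu (Jf 0) (0 - σ (Jf 0)) = i₀ := by
        rw [eJ0, hσ0]
        exact hElo _
      constructor
      · simp only [husdef, e1, e2, hnew0]
        have h2 : (t / k + 1) * (p * P) = t / k * (p * P) + p * P := by ring
        have h3 : Jf (t % k) * P + P ≤ p * P := by
          have h4 : Jf (t % k) + 1 ≤ p := hJP
          calc Jf (t % k) * P + P = (Jf (t % k) + 1) * P := by ring
            _ ≤ p * P := Nat.mul_le_mul_right _ h4
        omega
      · rw [husval, husval, e1, hnew0]
        have h3 : W.seq i₀ = W.seq (Eu (Jf (t % k)) (σ (Jf (t % k) + 1) - σ (Jf (t % k)))) := by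
          rw [hEhi, W.periodic]
        have h8 : σ (Jf (t % k) + 1) ≤ σ p := hσmono _ _ hJP
        have ea : t % k - σ (Jf (t % k)) + 1 = σ (Jf (t % k) + 1) - σ (Jf (t % k)) := by
          rw [hσp] at h8
          omega
        rw [h3, ← ea]
        exact hEadj _ _ ha
  have humono : StrictMono useq := strictMono_nat_of_lt_succ (fun t => (hkey t).1)
  -- periodicity of the index map
  have husper : ∀ t, useq (t + k) = useq t + p * P := by
    intro t
    simp only [husdef]
    rw [Nat.add_mod_right, Nat.add_div_right _ hk0]
    ring
  -- the new walk
  have hVcov : ∀ e : Fin n, ∃ t, t < k ∧ W.seq (useq t) = e := by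
    intro e
    obtain ⟨a, ha, hae⟩ := hEfirst 0 (π e) (hπ1 e) (hπ2 e) (fun s h1 h2 => hπf e s h1 h2)
    have hak : a < k := by
      have h1 : σ (0 + 1) ≤ σ p := hσmono _ _ (by omega)
      have h2 := hσ0
      omega
    refine ⟨a, hak, ?_⟩
    have hJa : Jf a = 0 := by
      have h6 := hJeq 0 a hp (by omega)
      rw [hσ0, Nat.zero_add] at h6
      exact h6
    rw [husval, Nat.mod_eq_of_lt hak, hJa, hσ0, Nat.sub_zero, hae, hπ3]
  let V : CWalk n k :=
    { seq := fun t => W.seq (useq t)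
      periodic := by
        intro t
        show W.seq (useq (t + k)) = W.seq (useq t)
        rw [husper]
        exact W.seq_add_mul _ _
      step := fun t => (hkey t).2
      covers := fun e => (hVcov e).imp (fun t h => ⟨h.1, h.2⟩) }
  have hVseq : ∀ t, V.seq t = W.seq (useq t) := fun t => rfl
  -- every residue of the first occurrence is hit
  have hhit : ∀ (e : Fin n) (c' : ℕ), ∃ t, useq t = π e + c' * P := by
    intro e c'
    obtain ⟨a, ha, hae⟩ := hEfirst (c' % p) (π e) (hπ1 e) (hπ2 e) (fun s h1 h2 => hπf e s h1 h2)
    refine ⟨σ (c' % p) + a + (c' / p) * k, ?_⟩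
    have hmp : c' % p < p := Nat.mod_lt _ hp
    have h1 : σ (c' % p) + a < k := by
      have h2 : σ (c' % p + 1) ≤ σ p := hσmono _ _ (by omega)
      omega
    have hmod : (σ (c' % p) + a + (c' / p) * k) % k = σ (c' % p) + a := by
      rw [Nat.add_mul_mod_self_right, Nat.mod_eq_of_lt h1]
    have hdiv : (σ (c' % p) + a + (c' / p) * k) / k = c' / p := by
      rw [Nat.add_mul_div_right _ _ hk0, Nat.div_eq_of_lt h1, Nat.zero_add]
    have hJ : Jf (σ (c' % p) + a) = c' % p := hJeq _ _ hmp ha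
    simp only [husdef]
    rw [hmod, hdiv, hJ, show σ (c' % p) + a - σ (c' % p) = a by omega, hae]
    have h5 : c' % p * P + c' / p * (p * P) = c' * P := by
      have h6 := Nat.mod_add_div c' p
      calc c' % p * P + c' / p * (p * P) = (c' % p + p * (c' / p)) * P := by ring
        _ = c' * P := by rw [h6]
    omega
  -- gap bound for the new walk
  have hgap_le : ∀ (e : Fin n) (x y : ℕ), V.IsGap e x y → V.tt c x y ≤ W.duration c := by
    intro e x y hg
    have hyx : useq y ≤ useq x + P := by
      by_contra hcon
      push_neg at hcon
      have hc0ex : ∃ c', useq x < π e + c' * P := by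
        refine ⟨useq x + 1, ?_⟩
        have h6 : useq x + 1 ≤ (useq x + 1) * P := Nat.le_mul_of_pos_right _ hP0
        omega
      set c₀ := Nat.find hc0ex with hc₀def
      have hc1 : useq x < π e + c₀ * P := Nat.find_spec hc0ex
      have hc2 : π e + c₀ * P ≤ useq x + P := by
        rcases Nat.eq_zero_or_pos c₀ with h | h
        · rw [h]
          have h7 := hπ2 e
          have h8 := husge x
          omega
        · have h3 := Nat.find_min hc0ex (m := c₀ - 1) (by omega)
          push_neg at h3
          have h4 : (c₀ - 1) * P + P = c₀ * P := by
            have h9 : c₀ - 1 + 1 = c₀ := by omega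
            calc (c₀ - 1) * P + P = ((c₀ - 1) + 1) * P := by ring
              _ = c₀ * P := by rw [h9]
          omega
      obtain ⟨t₀, ht₀⟩ := hhit e c₀
      have hx_t : x < t₀ := by
        have h6 : useq x < useq t₀ := by omega
        exact humono.lt_iff_lt.mp h6
      have ht_y : t₀ < y := by
        have h6 : useq t₀ < useq y := by omega
        exact humono.lt_iff_lt.mp h6
      refine hg.2.2.2 t₀ hx_t ht_y ?_
      rw [hVseq, ht₀, W.seq_add_mul, hπ3]
    have hcmp : V.tt c x y ≤ W.tt c (useq x) (useq y) := by
      have h1 : V.tt c x y = ∑ a ∈ Finset.range (y - x),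
          c (W.seq (useq (x + a))) (W.seq (useq (x + (a + 1)))) := by
        unfold tt
        rw [Finset.sum_Ico_eq_sum_range]
        apply Finset.sum_congr rfl
        intro a _
        rw [show x + a + 1 = x + (a + 1) by omega]
      rw [h1]
      calc ∑ a ∈ Finset.range (y - x), c (W.seq (useq (x + a))) (W.seq (useq (x + (a + 1))))
          ≤ ∑ a ∈ Finset.range (y - x), W.tt c (useq (x + a)) (useq (x + (a + 1))) := by
            apply Finset.sum_le_sum
            intro a _
            have h6 : x + (a + 1) = (x + a) + 1 := by omega
            rw [h6]
            exact W.le_tt htri (hkey (x + a)).1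
        _ = W.tt c (useq (x + 0)) (useq (x + (y - x))) :=
            W.tt_sum (fun a => useq (x + a)) (y - x)
              (fun a _ => by
                have h6 : x + (a + 1) = (x + a) + 1 := by omega
                show useq (x + a) ≤ useq (x + (a + 1))
                rw [h6]
                exact (hkey (x + a)).1.le)
        _ = W.tt c (useq x) (useq y) := by
            rw [Nat.add_zero, show x + (y - x) = y from by have := hg.1; omega]
    calc V.tt c x y ≤ W.tt c (useq x) (useq y) := hcmp
      _ ≤ W.tt c (useq x) (useq x + P) :=
          W.tt_mono hc (humono.le_iff_le.mpr hg.1.le) hyx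
      _ = W.duration c := W.tt_window _
  -- conclude
  have hdur0 : (0 : ℝ) ≤ W.duration c := W.tt_nonneg hc 0 P
  have hVRT : ∀ e, V.RT c e ≤ W.duration c := by
    intro e
    apply Real.sSup_le
    · rintro x ⟨i, j, h1, h2, h3, h4, rfl⟩
      exact hgap_le e i j ⟨h1, h2, h3, h4⟩
    · exact hdur0
  have hVR : V.R c ≤ W.duration c := V.R_le hdur0 hVRT
  have hWd : W.duration c ≤ W.R c := by
    have h1 : W.tt c i₀ (i₀ + P) ≤ W.RT c d := IsGap.le_RT W hc hP0 hgapd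
    rw [W.tt_window] at h1
    exact le_trans h1 (W.RT_le_R d)
  exact ⟨V, le_trans hVR hWd⟩

end CWalk

section Existence

/-- explicit closed walk with `p·n + q` visits (needs `n ≥ 3` unless `q = 0`) -/
lemma exists_walk (n p q : ℕ) (hn2 : 2 ≤ n) (hp : 0 < p) (hq : q ≤ n - 1)
    (hq' : q = 0 ∨ 3 ≤ n) : Nonempty (CWalk n (p * n + q)) := by
  set k := p * n + q with hkdef
  have hn0 : 0 < n := by omega
  have hpn : n ≤ p * n := Nat.le_mul_of_pos_left n hp
  have hk0 : 0 < k := by omega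
  set gv : ℕ → ℕ := fun x => if x < p * n then x % n else x - p * n + 1 with hgvdef
  have hgv : ∀ x, x < k → gv x < n := by
    intro x hx
    simp only [hgvdef]
    split
    · exact Nat.mod_lt _ hn0
    · omega
  have hgv0 : gv 0 = 0 := by
    simp only [hgvdef]
    rw [if_pos (by omega), Nat.zero_mod]
  have hpn1 : (p * n - 1) % n = n - 1 := by
    have h1 : p * n - 1 = (n - 1) + (p - 1) * n := by
      have h2 : (p - 1) * n + n = p * n := by
        calc (p - 1) * n + n = (p - 1 + 1) * n := by ring
          _ = p * n := by rw [show p - 1 + 1 = p by omega]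
      omega
    rw [h1, Nat.add_mul_mod_self_right, Nat.mod_eq_of_lt (by omega)]
  have hstepv : ∀ x, x + 1 < k → gv x ≠ gv (x + 1) := by
    intro x hx
    simp only [hgvdef]
    rcases Nat.lt_or_ge (x + 1) (p * n) with h1 | h1
    · rw [if_pos (by omega), if_pos h1]
      have h2 : (x + 1) % n = (x % n + 1) % n := by
        conv_lhs => rw [← Nat.mod_add_div x n]
        rw [show x % n + n * (x / n) + 1 = (x % n + 1) + (x / n) * n by ring,
          Nat.add_mul_mod_self_right]
      have h3 : x % n < n := Nat.mod_lt _ hn0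
      rcases Nat.lt_or_ge (x % n + 1) n with h4 | h4
      · rw [h2, Nat.mod_eq_of_lt h4]; omega
      · have h5 : x % n + 1 = n := by omega
        rw [h2, h5, Nat.mod_self]
        omega
    rcases Nat.lt_or_ge x (p * n) with h6 | h6
    · -- x = p*n - 1, x+1 = p*n; needs q ≥ 1 hence n ≥ 3
      have h7 : x = p * n - 1 := by omega
      have hq1 : 1 ≤ q := by omega
      have hn3 : 3 ≤ n := by rcases hq' with h | h <;> omega
      rw [if_pos h6, if_neg (by omega), h7, hpn1]
      omega
    · rw [if_neg (by omega), if_neg (by omega)]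
      omega
  have hwrap : gv (k - 1) ≠ 0 := by
    simp only [hgvdef]
    rcases Nat.eq_zero_or_pos q with h | h
    · rw [if_pos (by omega), show k - 1 = p * n - 1 by omega, hpn1]
      omega
    · rw [if_neg (by omega)]
      omega
  refine ⟨⟨fun t => ⟨gv (t % k), hgv _ (Nat.mod_lt _ hk0)⟩, ?_, ?_, ?_⟩⟩
  · intro t
    apply Fin.ext
    show gv ((t + k) % k) = gv (t % k)
    rw [Nat.add_mod_right]
  · intro t hcontra
    have hval : gv (t % k) = gv ((t + 1) % k) := congrArg Fin.val hcontra
    have ht' : t % k < k := Nat.mod_lt _ hk0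
    have hdecomp : t % k + k * (t / k) = t := Nat.mod_add_div t k
    rcases Nat.lt_or_ge (t % k + 1) k with hA | hB
    · have e1 : (t + 1) % k = t % k + 1 := by
        conv_lhs => rw [← hdecomp]
        rw [show t % k + k * (t / k) + 1 = (t % k + 1) + (t / k) * k by ring,
          Nat.add_mul_mod_self_right, Nat.mod_eq_of_lt hA]
      rw [e1] at hval
      exact hstepv _ (by omega) hval
    · have hBeq : t % k + 1 = k := by omega
      have e1 : (t + 1) % k = 0 := by
        have hmulk : t + 1 = (t / k + 1) * k := by
          have h2 : (t / k + 1) * k = t / k * k + k := by ring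
          have h3 : t / k * k = k * (t / k) := by ring
          omega
        rw [hmulk, Nat.mul_mod_left]
      rw [e1, hgv0, show t % k = k - 1 by omega] at hval
      exact hwrap hval
  · intro e
    refine ⟨e.val, by omega, ?_⟩
    apply Fin.ext
    show gv (e.val % k) = e.val
    have he : e.val < n := e.isLt
    rw [Nat.mod_eq_of_lt (by omega)]
    simp only [hgvdef]
    rw [if_pos (by omega), Nat.mod_eq_of_lt (by omega)]

/-- no closed walk on 2 targets with an odd period -/
lemma no_walk_odd (k : ℕ) (hk : k % 2 = 1) (W : CWalk 2 k) : False := by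
  have htwo : ∀ a b c : Fin 2, a ≠ b → c ≠ b → a = c := by decide
  have h2 : ∀ t, W.seq (t + 2) = W.seq t := by
    intro t
    exact htwo _ _ _ (W.step (t + 1)).symm ((W.step t))
  have heven : ∀ j, W.seq (2 * j) = W.seq 0 := by
    intro j
    induction j with
    | zero => rfl
    | succ j ih =>
      rw [show 2 * (j + 1) = 2 * j + 2 by ring, h2]
      exact ih
  have hodd : W.seq k ≠ W.seq 0 := by
    have hstep := W.step (2 * (k / 2))
    rw [heven] at hstep
    rw [show 2 * (k / 2) + 1 = k by omega] at hstep
    exact fun h => hstep h.symm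
  exact hodd (by have := W.periodic 0; simpa using this)

end Existence

/-- for every `k ≥ n`, writing `k = p n + q` with `p ≥ 1` and
`0 ≤ q ≤ n - 1`, we have `R*(k) = R*(n + ⌈q/p⌉)` (natural-division ceiling). -/
theorem Rstar_determined_by_first_n_values
    (n p q k : ℕ) (hn : 2 ≤ n) (hk0 : n ≤ k) (hp : 1 ≤ p) (hq : q ≤ n - 1)
    (hk : k = p * n + q)
    (c : Fin n → Fin n → ℝ)
    (hc : ∀ u v : Fin n, u ≠ v → 0 < c u v)
    (htri : ∀ u v w : Fin n, c u w ≤ c u v + c v w) :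
    Rstar n c k = Rstar n c (n + (q + p - 1) / p) := by
  classical
  set m := (q + p - 1) / p with hm
  have hdm := Nat.div_add_mod (q + p - 1) p
  rw [← hm] at hdm
  have hmod := Nat.mod_lt (q + p - 1) (show 0 < p by omega)
  have hpm_ge : q ≤ p * m := by omega
  have hpm_le : p * m ≤ q + p - 1 := by omega
  have hm_le_q : m ≤ q := by
    by_contra hcon
    push_neg at hcon
    have h1 : p * (q + 1) ≤ p * m := Nat.mul_le_mul_left p hcon
    have h2 : p * (q + 1) = p * q + p := by ring
    have h3 : q ≤ p * q := Nat.le_mul_of_pos_left q (show 0 < p by omega)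
    omega
  clear_value m
  clear hm hdm hmod
  have hP2 : n + m < 2 * n := by omega
  have hk1 : p * n ≤ k := by omega
  have hk2' : k ≤ p * (n + m) := by
    have h4 : p * (n + m) = p * n + p * m := by ring
    omega
  have hcount : k < n * (p + 1) := by
    have h4 : n * (p + 1) = p * n + n := by ring
    omega
  have hlen : p * (n + m - 1) < k := by
    have h1 : p * (n + m - 1) + p = p * (n + m) := by
      calc p * (n + m - 1) + p = p * ((n + m - 1) + 1) := by ring
        _ = p * (n + m) := by rw [show n + m - 1 + 1 = n + m by omega]
    have h2 : p * (n + m) = p * n + p * m := by ring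
    omega
  by_cases hsp : n = 2 ∧ q = 1
  · obtain ⟨hn2', hq1⟩ := hsp
    subst hn2'
    subst hq1
    have hkodd : k % 2 = 1 := by omega
    have hm1 : m = 1 := by
      rcases Nat.eq_zero_or_pos m with h | h
      · rw [h, Nat.mul_zero] at hpm_ge
        omega
      · omega
    rw [hm1]
    have hset1 : {T : ℝ | ∃ W : CWalk 2 k, T = W.R c} = ∅ := by
      apply Set.eq_empty_iff_forall_notMem.mpr
      rintro T ⟨W, rfl⟩
      exact no_walk_odd k hkodd W
    have hset2 : {T : ℝ | ∃ W : CWalk 2 (2 + 1), T = W.R c} = ∅ := by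
      apply Set.eq_empty_iff_forall_notMem.mpr
      rintro T ⟨W, rfl⟩
      exact no_walk_odd 3 (by norm_num) W
    unfold Rstar
    rw [hset1, hset2]
  · have hq' : q = 0 ∨ 3 ≤ n := by
      rcases Nat.lt_or_ge n 3 with h | h
      · left
        have : n = 2 := by omega
        rcases Nat.eq_zero_or_pos q with h0 | h0
        · exact h0
        · exfalso; exact hsp ⟨this, by omega⟩
      · right; exact h
    have hm' : m = 0 ∨ 3 ≤ n := by
      rcases hq' with h | h
      · left; omega
      · right; exact h
    obtain ⟨Wk⟩ : Nonempty (CWalk n k) := by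
      rw [hk]; exact exists_walk n p q hn (by omega) hq hq'
    obtain ⟨WP⟩ : Nonempty (CWalk n (n + m)) := by
      have h := exists_walk n 1 m hn (by omega) (by omega) hm'
      rwa [Nat.one_mul] at h
    apply le_antisymm
    · rw [show Rstar n c (n + m) = sInf {T : ℝ | ∃ W : CWalk n (n + m), T = W.R c} from rfl]
      refine le_csInf ⟨WP.R c, WP, rfl⟩ ?_
      rintro T ⟨W', rfl⟩
      obtain ⟨V, hV⟩ := W'.upper_aux hn hc htri (by omega) hP2 p k (by omega) hk1 hk2'
      exact le_trans (Rstar_le_R hc V) hV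
    · rw [show Rstar n c k = sInf {T : ℝ | ∃ W : CWalk n k, T = W.R c} from rfl]
      refine le_csInf ⟨Wk.R c, Wk, rfl⟩ ?_
      rintro T ⟨W, rfl⟩
      obtain ⟨V, hV⟩ := W.lower_aux hn hc htri p m (by omega) hcount hlen
      exact le_trans (Rstar_le_R hc V) hV
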